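/- Let α, β, n ∈ ℝ and let y : ℝ → ℝ be twice differentiable on (−1, 1) and satisfy the Jacobi differential equation (1 − x²)·y''(x) + (β − α − (α + β + 2)x)·y'(x) + n(n + α + β + 1)·y(x) = 0 for all x ∈ (−1, 1). Define Y : (0, π) → ℝ by Y(θ) = (1 − cos θ)^{(α + 1/2)/2} · (1 + cos θ)^{(β + 1/2)/2} · y(cos θ). Then Y is twice differentiable on (0, π) and satisfies Y''(θ) + [κ² + (1/4 − α²)/(4 sin²(θ/2)) + (1/4 − β²)/(4 cos²(θ/2))]·Y(θ) = 0 for all θ ∈ (0, π), where κ = n + (α + β + 1)/2. -/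

import Mathlib

open Set

set_option maxHeartbeats 1000000

private lemma cos_mem_Ioo' {θ : ℝ} (hθ : θ ∈ Ioo 0 Real.pi) :
    Real.cos θ ∈ Ioo (-1:ℝ) 1 := by
  constructor
  · have := Real.strictAntiOn_cos
      ⟨le_of_lt hθ.1, le_of_lt hθ.2⟩ (⟨Real.pi_pos.le, le_refl _⟩ : Real.pi ∈ Icc 0 Real.pi) hθ.2
    simpa [Real.cos_pi] using this
  · have := Real.strictAntiOn_cos (⟨le_refl _, Real.pi_pos.le⟩ : (0:ℝ) ∈ Icc 0 Real.pi)
      ⟨le_of_lt hθ.1, le_of_lt hθ.2⟩ hθ.1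
    simpa [Real.cos_zero] using this

private lemma key' (p q : ℝ) (f f' : ℝ → ℝ) {θ : ℝ} (hθ : θ ∈ Ioo 0 Real.pi)
    (hf : HasDerivAt f (f' (Real.cos θ)) (Real.cos θ)) :
    HasDerivAt (fun t => (1 - Real.cos t) ^ p * (1 + Real.cos t) ^ q * f (Real.cos t))
      ((1 - Real.cos θ) ^ p * (1 + Real.cos θ) ^ q *
        (Real.sin θ * (p / (1 - Real.cos θ) - q / (1 + Real.cos θ)) * f (Real.cos θ)
          - Real.sin θ * f' (Real.cos θ))) θ := by
  have hc := cos_mem_Ioo' hθ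
  have hu : (0:ℝ) < 1 - Real.cos θ := by linarith [hc.2]
  have hv : (0:ℝ) < 1 + Real.cos θ := by linarith [hc.1]
  have hcos : HasDerivAt Real.cos (-Real.sin θ) θ := Real.hasDerivAt_cos θ
  have h1 : HasDerivAt (fun t => (1 - Real.cos t) ^ p)
      (p * (1 - Real.cos θ) ^ (p - 1) * Real.sin θ) θ := by
    have := (Real.hasDerivAt_rpow_const (x := 1 - Real.cos θ) (p := p) (Or.inl hu.ne')).comp θ
      (hcos.const_sub 1)
    refine this.congr_deriv ?_
    simp
  have h2 : HasDerivAt (fun t => (1 + Real.cos t) ^ q)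
      (q * (1 + Real.cos θ) ^ (q - 1) * (-Real.sin θ)) θ := by
    have := (Real.hasDerivAt_rpow_const (x := 1 + Real.cos θ) (p := q) (Or.inl hv.ne')).comp θ
      (hcos.const_add 1)
    exact this
  have h3 : HasDerivAt (fun t => f (Real.cos t)) (f' (Real.cos θ) * (-Real.sin θ)) θ :=
    hf.comp θ hcos
  have := (h1.mul h2).mul h3
  refine this.congr_deriv ?_
  simp only [Pi.mul_apply]
  rw [Real.rpow_sub hu, Real.rpow_sub hv, Real.rpow_one, Real.rpow_one]
  field_simp
  ring

theorem stmt_2 (α β n : ℝ) (y y' y'' : ℝ → ℝ)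
    (hy1 : ∀ x ∈ Ioo (-1 : ℝ) 1, HasDerivAt y (y' x) x)
    (hy2 : ∀ x ∈ Ioo (-1 : ℝ) 1, HasDerivAt y' (y'' x) x)
    (hODE : ∀ x ∈ Ioo (-1 : ℝ) 1,
      (1 - x ^ 2) * y'' x + (β - α - (α + β + 2) * x) * y' x
        + n * (n + α + β + 1) * y x = 0)
    (Y : ℝ → ℝ)
    (hY : ∀ θ, Y θ = (1 - Real.cos θ) ^ ((α + 1 / 2) / 2)
        * (1 + Real.cos θ) ^ ((β + 1 / 2) / 2) * y (Real.cos θ))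
    (κ : ℝ) (hκ : κ = n + (α + β + 1) / 2) :
    ∃ Y' Y'' : ℝ → ℝ, ∀ θ ∈ Ioo 0 Real.pi,
      HasDerivAt Y (Y' θ) θ ∧ HasDerivAt Y' (Y'' θ) θ ∧
      Y'' θ + (κ ^ 2 + (1 / 4 - α ^ 2) / (4 * Real.sin (θ / 2) ^ 2)
        + (1 / 4 - β ^ 2) / (4 * Real.cos (θ / 2) ^ 2)) * Y θ = 0 := by
  subst hκ
  set a : ℝ := (α + 1 / 2) / 2 with ha
  set b : ℝ := (β + 1 / 2) / 2 with hb
  set g : ℝ → ℝ := fun x => Real.sqrt (1 - x ^ 2) *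
      ((a / (1 - x) - b / (1 + x)) * y x - y' x) with hg_def
  set h : ℝ → ℝ := fun x => -x / Real.sqrt (1 - x ^ 2) *
      ((a / (1 - x) - b / (1 + x)) * y x - y' x)
      + Real.sqrt (1 - x ^ 2) *
      ((a / (1 - x) ^ 2 + b / (1 + x) ^ 2) * y x
        + (a / (1 - x) - b / (1 + x)) * y' x - y'' x) with hh_def
  have hg : ∀ x ∈ Ioo (-1 : ℝ) 1, HasDerivAt g (h x) x := by
    intro x hx
    have hu : (0:ℝ) < 1 - x := by linarith [hx.2]
    have hv : (0:ℝ) < 1 + x := by linarith [hx.1]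
    have h1x2 : (0:ℝ) < 1 - x ^ 2 := by nlinarith
    have hsq : (0:ℝ) < Real.sqrt (1 - x ^ 2) := Real.sqrt_pos.mpr h1x2
    have hs : HasDerivAt (fun x : ℝ => Real.sqrt (1 - x ^ 2))
        (-x / Real.sqrt (1 - x ^ 2)) x := by
      have := (Real.hasDerivAt_sqrt h1x2.ne').comp x
        (((hasDerivAt_pow 2 x)).const_sub 1)
      refine this.congr_deriv ?_
      field_simp
      ring
    have hq1 : HasDerivAt (fun x : ℝ => a / (1 - x)) (a / (1 - x) ^ 2) x := by
      have := (hasDerivAt_const x a).div ((hasDerivAt_id x).const_sub 1) hu.ne'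
      refine this.congr_deriv ?_
      simp only [id]
      field_simp
      ring
    have hq2 : HasDerivAt (fun x : ℝ => b / (1 + x)) (-(b / (1 + x) ^ 2)) x := by
      have := (hasDerivAt_const x b).div ((hasDerivAt_id x).const_add 1) hv.ne'
      refine this.congr_deriv ?_
      simp only [id]
      field_simp
      ring
    have hw : HasDerivAt (fun x => (a / (1 - x) - b / (1 + x)) * y x - y' x)
        ((a / (1 - x) ^ 2 + b / (1 + x) ^ 2) * y x
          + (a / (1 - x) - b / (1 + x)) * y' x - y'' x) x := by
      have := ((hq1.sub hq2).mul (hy1 x hx)).sub (hy2 x hx)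
      refine this.congr_deriv ?_
      simp only [Pi.sub_apply]
      ring
    have := hs.mul hw
    rw [hh_def]
    exact this
  refine ⟨fun t => (1 - Real.cos t) ^ a * (1 + Real.cos t) ^ b * g (Real.cos t),
    fun t => (1 - Real.cos t) ^ a * (1 + Real.cos t) ^ b *
      (Real.sin t * (a / (1 - Real.cos t) - b / (1 + Real.cos t)) * g (Real.cos t)
        - Real.sin t * h (Real.cos t)), ?_⟩
  intro θ hθ
  have hcm := cos_mem_Ioo' hθ
  have hu : (0:ℝ) < 1 - Real.cos θ := by linarith [hcm.2]
  have hv : (0:ℝ) < 1 + Real.cos θ := by linarith [hcm.1]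
  have hspos : (0:ℝ) < Real.sin θ := Real.sin_pos_of_pos_of_lt_pi hθ.1 hθ.2
  have hs2 : Real.sin θ ^ 2 = 1 - Real.cos θ ^ 2 := by
    nlinarith [Real.sin_sq_add_cos_sq θ]
  have hsqrt : Real.sqrt (1 - Real.cos θ ^ 2) = Real.sin θ := by
    rw [← hs2]; exact Real.sqrt_sq hspos.le
  have h1c : (0:ℝ) < 1 - Real.cos θ ^ 2 := by nlinarith
  have hODE' := hODE _ hcm
  refine ⟨?_, ?_, ?_⟩
  · have hYf : Y = fun t => (1 - Real.cos t) ^ a * (1 + Real.cos t) ^ b * y (Real.cos t) :=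
      funext hY
    rw [hYf]
    have := key' a b y y' hθ (hy1 _ hcm)
    convert this using 1
    rw [hg_def]
    simp only []
    rw [hsqrt]
    ring
  · exact key' a b g h hθ (hg _ hcm)
  · have hsinh : Real.sin (θ / 2) ^ 2 = (1 - Real.cos θ) / 2 := by
      have h2 := Real.cos_two_mul (θ / 2)
      rw [show 2 * (θ / 2) = θ by ring] at h2
      nlinarith [Real.sin_sq_add_cos_sq (θ / 2)]
    have hcosh : Real.cos (θ / 2) ^ 2 = (1 + Real.cos θ) / 2 := by
      have h2 := Real.cos_two_mul (θ / 2)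
      rw [show 2 * (θ / 2) = θ by ring] at h2
      nlinarith [Real.sin_sq_add_cos_sq (θ / 2)]
    simp only [hY θ, hsinh, hcosh]
    set c : ℝ := Real.cos θ with hc
    set s : ℝ := Real.sin θ with hsv
    have hy''eq : y'' c = (((α - β + (α + β + 2) * c) * y' c - n * (n + α + β + 1) * y c) / (1 - c ^ 2)) := by
      rw [eq_div_iff h1c.ne']
      linear_combination hODE'
    have hgc : g c = s * ((a / (1 - c) - b / (1 + c)) * y c - y' c) := by
      simp only [hg_def]
      rw [hsqrt]
    have hhc : s * h c = -c * ((a / (1 - c) - b / (1 + c)) * y c - y' c) + s ^ 2 * ((a / (1 - c) ^ 2 + b / (1 + c) ^ 2) * y c + (a / (1 - c) - b / (1 + c)) * y' c - (((α - β + (α + β + 2) * c) * y' c - n * (n + α + β + 1) * y c) / (1 - c ^ 2))) := by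
      simp only [hh_def]
      rw [hsqrt, hy''eq]
      field_simp
    have hmain : (1 - c ^ 2) * ((a / (1 - c) - b / (1 + c)) * ((a / (1 - c) - b / (1 + c)) * y c - y' c)) + c * ((a / (1 - c) - b / (1 + c)) * y c - y' c)
        - (1 - c ^ 2) * ((a / (1 - c) ^ 2 + b / (1 + c) ^ 2) * y c + (a / (1 - c) - b / (1 + c)) * y' c - (((α - β + (α + β + 2) * c) * y' c - n * (n + α + β + 1) * y c) / (1 - c ^ 2))) + ((n + (α + β + 1) / 2) ^ 2 + (1 / 4 - α ^ 2) / (4 * ((1 - c) / 2)) + (1 / 4 - β ^ 2) / (4 * ((1 + c) / 2))) * y c = 0 := by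
      rw [ha, hb, show (1:ℝ) - c ^ 2 = (1 - c) * (1 + c) from by ring]
      field_simp
      ring
    rw [hgc, hhc]
    linear_combination (((1 - c) ^ a * (1 + c) ^ b)) * hmain
      + (((1 - c) ^ a * (1 + c) ^ b)) * ((a / (1 - c) - b / (1 + c)) * ((a / (1 - c) - b / (1 + c)) * y c - y' c) - ((a / (1 - c) ^ 2 + b / (1 + c) ^ 2) * y c + (a / (1 - c) - b / (1 + c)) * y' c - (((α - β + (α + β + 2) * c) * y' c - n * (n + α + β + 1) * y c) / (1 - c ^ 2)))) * hs2
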